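/- Let S be a finite set of points in ℝ² in strictly convex position with |S| ≥ 3, let r ∈ S, and let r₁ ∈ S be such that the open segment between r and r₁ contains no point of conv(S \ {r}) — equivalently, r and r₁ are adjacent vertices of the convex polygon conv(S). Then for every point a in the open segment (r, r₁), the set S' = (S \ {r}) ∪ {a} satisfies: a is an extreme point of conv(S'). -/

import Mathlib

lemma aux_extreme_insert {E : Type*} [AddCommGroup E] [Module ℝ E] {B : Set E}
    (hB : Convex ℝ B) (hBne : B.Nonempty) {a : E} (ha : a ∉ B) :
    a ∈ Set.extremePoints ℝ (convexHull ℝ (insert a B)) := by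
  have hhull : convexHull ℝ (insert a B) = convexJoin ℝ {a} B := by
    rw [convexHull_insert hBne, hB.convexHull_eq]
  refine ⟨subset_convexHull ℝ _ (Set.mem_insert a B), ?_⟩
  rintro x₁ hx₁ x₂ hx₂ hseg
  rw [hhull] at hx₁ hx₂
  rw [mem_convexJoin] at hx₁ hx₂
  obtain ⟨a', ha', z₁, hz₁, hx₁s⟩ := hx₁
  obtain ⟨a'', ha'', z₂, hz₂, hx₂s⟩ := hx₂
  rw [Set.mem_singleton_iff] at ha' ha''
  rw [ha'] at hx₁s
  rw [ha''] at hx₂s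
  obtain ⟨u₁, v₁, hu₁, hv₁, huv₁, hx₁e⟩ := hx₁s
  obtain ⟨u₂, v₂, hu₂, hv₂, huv₂, hx₂e⟩ := hx₂s
  obtain ⟨t₁, t₂, ht₁, ht₂, ht, hte⟩ := hseg
  set c := t₁ * v₁ + t₂ * v₂ with hcdef
  have h : t₁ • (u₁ • a + v₁ • z₁) + t₂ • (u₂ • a + v₂ • z₂) = a := by
    rw [hx₁e, hx₂e]; exact hte
  have hsum : t₁ * u₁ + t₂ * u₂ = 1 - c := by
    linear_combination t₁ * huv₁ + t₂ * huv₂ + ht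
  have h2 : (1 - c) • a + ((t₁ * v₁) • z₁ + (t₂ * v₂) • z₂) = a :=
    calc (1 - c) • a + ((t₁ * v₁) • z₁ + (t₂ * v₂) • z₂)
        = t₁ • (u₁ • a + v₁ • z₁) + t₂ • (u₂ • a + v₂ • z₂) := by
          rw [← hsum]; module
      _ = a := h
  have key : c • a = (t₁ * v₁) • z₁ + (t₂ * v₂) • z₂ := by
    linear_combination (norm := module) -h2
  have h1nn : 0 ≤ t₁ * v₁ := mul_nonneg ht₁.le hv₁
  have h2nn : 0 ≤ t₂ * v₂ := mul_nonneg ht₂.le hv₂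
  rcases eq_or_lt_of_le (by positivity : (0:ℝ) ≤ c) with hc0 | hcpos
  · -- c = 0, so v₁ = v₂ = 0, u₁ = u₂ = 1
    have hv1 : v₁ = 0 := by nlinarith
    have hv2 : v₂ = 0 := by nlinarith
    have hu1 : u₁ = 1 := by linarith
    have hu2 : u₂ = 1 := by linarith
    rw [← hx₁e, hv1, hu1]; simp
  · -- c > 0, derive a ∈ B, contradiction
    exfalso
    have hcne : c ≠ 0 := ne_of_gt hcpos
    have ha' : a = (c⁻¹ * (t₁ * v₁)) • z₁ + (c⁻¹ * (t₂ * v₂)) • z₂ := by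
      have := congrArg (fun w => c⁻¹ • w) key
      simp only [smul_smul] at this
      rw [inv_mul_cancel₀ hcne, one_smul, smul_add, smul_smul, smul_smul] at this
      exact this
    have hmem : (c⁻¹ * (t₁ * v₁)) • z₁ + (c⁻¹ * (t₂ * v₂)) • z₂ ∈ B := by
      apply hB hz₁ hz₂ (by positivity) (by positivity)
      field_simp
      exact hcdef.symm
    rw [← ha'] at hmem
    exact ha hmem

theorem stmt16 (S : Finset (EuclideanSpace ℝ (Fin 2))) (h3 : 3 ≤ S.card)
    (hconvpos : ∀ x ∈ S, x ∉ convexHull ℝ ((S : Set (EuclideanSpace ℝ (Fin 2))) \ {x}))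
    (r r₁ : EuclideanSpace ℝ (Fin 2)) (hr : r ∈ S) (hr1 : r₁ ∈ S) (hne : r ≠ r₁)
    (hedge : Disjoint (openSegment ℝ r r₁)
      (convexHull ℝ ((S : Set (EuclideanSpace ℝ (Fin 2))) \ {r}))) :
    ∀ a ∈ openSegment ℝ r r₁,
      a ∈ Set.extremePoints ℝ
        (convexHull ℝ (((S : Set (EuclideanSpace ℝ (Fin 2))) \ {r}) ∪ {a})) := by
  intro a ha
  set D : Set (EuclideanSpace ℝ (Fin 2)) := (S : Set (EuclideanSpace ℝ (Fin 2))) \ {r} with hD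
  set B : Set (EuclideanSpace ℝ (Fin 2)) := convexHull ℝ D with hB
  have haB : a ∉ B := fun h => Set.disjoint_left.mp hedge ha h
  have hDne : D.Nonempty := ⟨r₁, Finset.mem_coe.mpr hr1, fun h => hne (Set.mem_singleton_iff.mp h).symm⟩
  have hBne : B.Nonempty := hDne.mono (subset_convexHull ℝ D)
  have hunion : D ∪ {a} = insert a D := Set.union_singleton
  rw [hunion]
  have heq : convexHull ℝ (insert a D) = convexHull ℝ (insert a B) := by
    apply le_antisymm
    · exact convexHull_mono (Set.insert_subset_insert (subset_convexHull ℝ D))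
    · apply convexHull_min _ (convex_convexHull ℝ _)
      apply Set.insert_subset (subset_convexHull ℝ _ (Set.mem_insert a D))
      exact convexHull_mono (Set.subset_insert a D)
  rw [heq]
  exact aux_extreme_insert (convex_convexHull ℝ D) hBne haB
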